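/- arXiv:1605.05009 — 2 statements merged into one kernel-verified Lean document; each statement's English description precedes it below -/
import Mathlib

section
/- Let R be a simple right Goldie ring. Then the following are equivalent: (1) R is a right Σ-V ring; (2) every singular simple right R-module is Σ-injective; (3) R is a right V-ring and R is q.f.d. relative to every singular simple right R-module. -/
universe u

open MulOpposite

/-- A right `A`-module `M` is Σ-injective if the direct sum of any family of copies of `M`
is injective. -/
def IsSigmaInjective (A : Type u) [Ring A] (M : Type u) [AddCommGroup M] [Module A M] : Prop :=
  ∀ ι : Type u, Module.Injective A (ι →₀ M)

/-- `R` is a right Σ-V ring: every simple right `R`-module is Σ-injective.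
Right `R`-modules are modules over `Rᵐᵒᵖ`. -/
def IsRightSigmaVRing (R : Type u) [Ring R] : Prop :=
  ∀ (S : Type u) [AddCommGroup S] [Module Rᵐᵒᵖ S],
    IsSimpleModule Rᵐᵒᵖ S → IsSigmaInjective Rᵐᵒᵖ S

/-- `R` is a right V-ring: every simple right `R`-module is injective. -/
def IsRightVRing (R : Type u) [Ring R] : Prop :=
  ∀ (S : Type u) [AddCommGroup S] [Module Rᵐᵒᵖ S],
    IsSimpleModule Rᵐᵒᵖ S → Module.Injective Rᵐᵒᵖ S

/-- `A` is q.f.d. relative to `M`: no cyclic `A`-module contains an infinite direct sum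
(i.e., an infinite independent family) of nonzero submodules each isomorphic to a
submodule of `M`. -/
def QfdRelativeTo (A : Type u) [Ring A] (M : Type u) [AddCommGroup M] [Module A M] : Prop :=
  ∀ (C : Type u) [AddCommGroup C] [Module A C], (⊤ : Submodule A C).IsPrincipal →
    ∀ N : ℕ → Submodule A C, iSupIndep N → (∀ i, N i ≠ ⊥) →
      (∀ i, ∃ K : Submodule A M, Nonempty ((N i) ≃ₗ[A] K)) → False

/-- A right `R`-module `M` is singular if every element of `M` is annihilated by an
essential right ideal of `R`. -/
def IsSingularModule (R : Type u) [Ring R] (M : Type u) [AddCommGroup M]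
    [Module Rᵐᵒᵖ M] : Prop :=
  ∀ m : M, ∃ I : Submodule Rᵐᵒᵖ R,
    (∀ J : Submodule Rᵐᵒᵖ R, J ≠ ⊥ → I ⊓ J ≠ ⊥) ∧ ∀ r ∈ I, (op r) • m = 0

/-- `R` is a right Goldie ring: the right `R`-module `R` has finite uniform dimension
and `R` satisfies the ascending chain condition on right annihilators. -/
def IsRightGoldieRing (R : Type u) [Ring R] : Prop :=
  (¬ ∃ N : ℕ → Submodule Rᵐᵒᵖ R, iSupIndep N ∧ ∀ i, N i ≠ ⊥) ∧
    ∀ f : ℕ → Set R, Monotone f →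
      (∀ n, ∃ T : Set R, f n = {r : R | ∀ s ∈ T, s * r = 0}) →
      ∃ n, ∀ m, n ≤ m → f m = f n

/-! ### Auxiliary general lemmas -/

section Aux

variable {A : Type u} [Ring A]

/-- Injectivity transfers along a linear equivalence. -/
theorem Module.Injective.congr' {M N : Type u} [AddCommGroup M] [AddCommGroup N]
    [Module A M] [Module A N] (e : M ≃ₗ[A] N) (h : Module.Injective A M) :
    Module.Injective A N where
  out X Y _ _ _ _ f hf g := by
    obtain ⟨h', hh'⟩ := h.out f hf (e.symm.toLinearMap.comp g)
    refine ⟨e.toLinearMap.comp h', fun x => ?_⟩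
    simp only [LinearMap.coe_comp, Function.comp_apply, LinearEquiv.coe_coe]
    rw [hh' x]
    simp

/-- The image of a simple submodule under a linear map is trivial or simple. -/
theorem map_simple_or_bot {M N : Type u} [AddCommGroup M] [AddCommGroup N]
    [Module A M] [Module A N] (f : M →ₗ[A] N) (p : Submodule A M)
    (hp : IsSimpleModule A ↥p) : p.map f = ⊥ ∨ IsSimpleModule A ↥(p.map f) := by
  haveI := hp
  let g := f.comp p.subtype
  have hrange : LinearMap.range g = p.map f := by
    rw [LinearMap.range_comp, Submodule.range_subtype]
  rcases eq_bot_or_eq_top (LinearMap.ker g) with h | h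
  · right
    have hinj : Function.Injective g := LinearMap.ker_eq_bot.1 h
    rw [← hrange]
    exact IsSimpleModule.congr (LinearEquiv.ofInjective g hinj).symm
  · left
    rw [← hrange]
    exact LinearMap.range_eq_bot.2 (LinearMap.ker_eq_top.1 h)

/-- A finsupp power of a simple module is semisimple. -/
theorem isSemisimpleModule_finsupp {S : Type u} [AddCommGroup S] [Module A S]
    [IsSimpleModule A S] (ι : Type u) : IsSemisimpleModule A (ι →₀ S) := by
  haveI : IsSemisimpleModule A S := inferInstance
  refine isSemisimpleModule_of_isSemisimpleModule_submodule'
    (p := fun i : ι => LinearMap.range (Finsupp.lsingle i : S →ₗ[A] ι →₀ S)) (fun i => ?_)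
    Finsupp.iSup_lsingle_range
  exact IsSemisimpleModule.congr
    (LinearEquiv.ofInjective (Finsupp.lsingle i) (Finsupp.single_injective i)).symm

/-- Independence is preserved under injective maps. -/
theorem iSupIndep_map_of_injective {M N : Type u} [AddCommGroup M] [AddCommGroup N]
    [Module A M] [Module A N] {f : M →ₗ[A] N} (hf : Function.Injective f)
    {p : ℕ → Submodule A M} (hp : iSupIndep p) :
    iSupIndep fun n => (p n).map f := by
  intro n
  rw [disjoint_iff]
  have h1 : (⨆ j, ⨆ _ : j ≠ n, (p j).map f) = ((⨆ j, ⨆ _ : j ≠ n, p j)).map f := by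
    simp only [Submodule.map_iSup]
  rw [h1, ← Submodule.map_inf f hf, (hp n).eq_bot, Submodule.map_bot]

/-- Easy direction: Σ-injectivity implies relative q.f.d. -/
theorem QfdRelativeTo.of_sigmaInjective {S : Type u} [AddCommGroup S] [Module A S]
    (h : IsSigmaInjective A S) : QfdRelativeTo A S := by
  classical
  intro C _ _ hprin N hind hne hiso
  choose K hK using hiso
  have iso : ∀ i, ↥(N i) ≃ₗ[A] ↥(K i) := fun i => Classical.choice (hK i)
  let φ : (Π₀ i : ℕ, ↥(N i)) →ₗ[A] C := DFinsupp.lsum ℕ fun i => (N i).subtype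
  have hφ : Function.Injective φ := hind.dfinsupp_lsum_injective
  let ψ : (Π₀ i : ℕ, ↥(N i)) →ₗ[A] (ULift.{u} ℕ →₀ S) :=
    DFinsupp.lsum ℕ fun i =>
      (Finsupp.lsingle (ULift.up i)).comp ((K i).subtype.comp (iso i).toLinearMap)
  obtain ⟨g, hg⟩ := (h (ULift.{u} ℕ)).out φ hφ ψ
  obtain ⟨c, hc⟩ := hprin.principal
  obtain ⟨nl, hn⟩ := Infinite.exists_notMem_finset (g c).support
  obtain ⟨n, rfl⟩ : ∃ n : ℕ, ULift.up n = nl := ⟨nl.down, rfl⟩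
  obtain ⟨x, hxN, hx0⟩ := (Submodule.ne_bot_iff (N n)).1 (hne n)
  have h1 : φ (DFinsupp.single n ⟨x, hxN⟩) = x := by
    simp [φ]
  have h2 : g x = Finsupp.single (ULift.up n) ((iso n ⟨x, hxN⟩ : ↥(K n)) : S) := by
    have hgx := hg (DFinsupp.single n ⟨x, hxN⟩)
    rw [h1] at hgx
    rw [hgx]
    simp [ψ]
  have h3 : g x (ULift.up n) ≠ 0 := by
    rw [h2, Finsupp.single_eq_same]
    simp only [ne_eq, ZeroMemClass.coe_eq_zero]
    intro hcontr
    apply hx0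
    have : (⟨x, hxN⟩ : ↥(N n)) = 0 := (iso n).map_eq_zero_iff.1 hcontr
    simpa using congrArg Subtype.val this
  have hx_top : x ∈ (⊤ : Submodule A C) := trivial
  rw [hc] at hx_top
  obtain ⟨a, ha⟩ := Submodule.mem_span_singleton.1 hx_top
  have h4 : g x (ULift.up n) = 0 := by
    rw [← ha, map_smul]
    have hgc : g c (ULift.up n) = 0 := Finsupp.notMem_support_iff.1 hn
    rw [Finsupp.smul_apply, hgc, smul_zero]
  exact h3 h4

/-- Hard direction: a simple injective module with the relative q.f.d. property
is Σ-injective. -/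
theorem IsSigmaInjective.of_injective_qfd {S : Type u} [AddCommGroup S] [Module A S]
    [IsSimpleModule A S] (hinj : Module.Injective A S) (hqfd : QfdRelativeTo A S) :
    IsSigmaInjective A S := by
  classical
  intro ι
  refine Module.Baer.injective (fun I f => ?_)
  have hext : ∀ i : ι, ∃ H : A →ₗ[A] S, ∀ x : ↥I, H ↑x = ((Finsupp.lapply i).comp f) x :=
    fun i => hinj.out I.subtype I.injective_subtype ((Finsupp.lapply i).comp f)
  choose H hH using hext
  let G : A →ₗ[A] (ι → S) := LinearMap.pi H
  let C : Type u := A ⧸ LinearMap.ker G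
  let Gb : C →ₗ[A] (ι → S) := (LinearMap.ker G).liftQ G le_rfl
  have hGb : Function.Injective Gb := by
    rw [← LinearMap.ker_eq_bot]
    exact Submodule.ker_liftQ_eq_bot _ _ _ le_rfl
  let e : (ι →₀ S) →ₗ[A] (ι → S) := LinearMap.pi fun i => Finsupp.lapply i
  have he : Function.Injective e := by
    intro x y hxy
    ext i
    have h := congrFun hxy i
    simpa [e, LinearMap.pi_apply] using h
  let V : Submodule A (ι →₀ S) := Submodule.comap e (LinearMap.range Gb)
  have hfV : ∀ x : ↥I, f x ∈ V := by
    intro x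
    refine Submodule.mem_comap.2 ⟨Submodule.Quotient.mk ↑x, ?_⟩
    have hq : Gb (Submodule.Quotient.mk (↑x : A)) = G ↑x := rfl
    rw [hq]
    ext i
    show H i ↑x = (f x) i
    simpa using hH i x
  haveI hss : IsSemisimpleModule A (ι →₀ S) := isSemisimpleModule_finsupp ι
  obtain ⟨s, hs_ind, hs_top, hs_simp⟩ :=
    IsSemisimpleModule.exists_sSupIndep_sSup_simples_eq_top A ↥V
  by_cases hfin : s.Finite
  · -- the support of everything in `V` lies in a finite set; extend coordinatewise
    have key : ∀ X ∈ s, ∃ w : ι →₀ S, ∀ y, y ∈ X → ∃ a : A, ((y : ↥V) : ι →₀ S) = a • w := by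
      intro X hX
      haveI hsimp := hs_simp X hX
      have hatom : IsAtom X := (isSimpleModule_iff_isAtom).1 hsimp
      obtain ⟨v, hv, hv0⟩ := (Submodule.ne_bot_iff X).1 hatom.1
      refine ⟨(v : ι →₀ S), fun y hy => ?_⟩
      have hspan : Submodule.span A {v} = X := by
        have hle : Submodule.span A {v} ≤ X := by
          rw [Submodule.span_le, Set.singleton_subset_iff]; exact hv
        rcases lt_or_eq_of_le hle with hlt | heq
        · exact absurd (hatom.2 _ hlt) (by
            intro hbot
            apply hv0
            have : v ∈ Submodule.span A {v} := Submodule.mem_span_singleton_self v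
            rw [hbot] at this
            simpa using this)
        · exact heq
      rw [← hspan] at hy
      obtain ⟨a, ha⟩ := Submodule.mem_span_singleton.1 hy
      exact ⟨a, by rw [← ha]; rfl⟩
    choose! w hw using key
    let Sset : Set ι := ⋃ X ∈ s, ↑((w X).support)
    have hSfin : Sset.Finite := hfin.biUnion fun X _ => (w X).support.finite_toSet
    have hVsup : ∀ v : ↥V, (v : ι →₀ S) ∈ Finsupp.supported S A Sset := by
      intro v
      have hv_top : v ∈ (⊤ : Submodule A ↥V) := trivial
      rw [← hs_top, sSup_eq_iSup] at hv_top
      have hle : (⨆ X ∈ s, X) ≤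
          Submodule.comap V.subtype (Finsupp.supported S A Sset) := by
        refine iSup₂_le fun X hX => ?_
        intro y hy
        obtain ⟨a, ha⟩ := hw X hX y hy
        refine Submodule.mem_comap.2 ?_
        rw [Finsupp.mem_supported]
        show ↑((y : ι →₀ S)).support ⊆ Sset
        rw [ha]
        refine subset_trans ?_ (Set.subset_biUnion_of_mem (u := fun X : Submodule A ↥V => (((w X).support : Finset ι) : Set ι)) hX)
        exact Finset.coe_subset.mpr Finsupp.support_smul
      exact hle hv_top
    refine ⟨∑ i ∈ hSfin.toFinset, (Finsupp.lsingle i).comp (H i), fun x mem => ?_⟩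
    have hfx := hVsup ⟨f ⟨x, mem⟩, hfV ⟨x, mem⟩⟩
    rw [Finsupp.mem_supported] at hfx
    ext j
    rw [LinearMap.sum_apply]
    have hsum : (∑ i ∈ hSfin.toFinset, ((Finsupp.lsingle i).comp (H i)) x) j
        = ∑ i ∈ hSfin.toFinset, Finsupp.single i (H i x) j := by
      rw [Finsupp.finset_sum_apply]
      rfl
    rw [hsum]
    simp only [Finsupp.single_apply]
    rw [Finset.sum_ite_eq' hSfin.toFinset j fun i => H i x]
    by_cases hj : j ∈ hSfin.toFinset
    · rw [if_pos hj]
      simpa using hH j ⟨x, mem⟩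
    · rw [if_neg hj]
      symm
      rw [← Finsupp.notMem_support_iff]
      intro hmem
      exact hj (by
        rw [Set.Finite.mem_toFinset]
        exact hfx hmem)
  · -- infinitely many simple pieces: contradiction with q.f.d.
    exfalso
    have hinf : s.Infinite := hfin
    let emb := hinf.natEmbedding
    let X : ℕ → Submodule A ↥V := fun n => ↑(emb n)
    have hXs : ∀ n, X n ∈ s := fun n => (emb n).2
    have hXinj : Function.Injective X := by
      intro a b hab
      exact emb.injective (Subtype.ext hab)
    have hXind : iSupIndep X := by
      intro n
      refine Disjoint.mono_right ?_ (hs_ind (hXs n))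
      refine iSup₂_le fun m hmn => ?_
      refine le_sSup ⟨hXs m, ?_⟩
      simp only [Set.mem_singleton_iff]
      intro hEq
      exact hmn (hXinj hEq)
    have hXbot : ∀ n, X n ≠ ⊥ := fun n =>
      ((isSimpleModule_iff_isAtom).1 (hs_simp _ (hXs n))).1
    let eV : ↥V →ₗ[A] (ι → S) := e.comp V.subtype
    have heV : ∀ v : ↥V, eV v ∈ LinearMap.range Gb := fun v => v.2
    have heVinj : Function.Injective eV := by
      intro a b hab
      exact Subtype.ext (he hab)
    let j : ↥V →ₗ[A] C :=
      (LinearEquiv.ofInjective Gb hGb).symm.toLinearMap.comp (eV.codRestrict _ heV)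
    have hj : Function.Injective j := by
      intro a b hab
      have h1 : (LinearEquiv.ofInjective Gb hGb).symm ((eV.codRestrict _ heV) a)
          = (LinearEquiv.ofInjective Gb hGb).symm ((eV.codRestrict _ heV) b) := hab
      have h2 := (LinearEquiv.ofInjective Gb hGb).symm.injective h1
      exact heVinj (congrArg Subtype.val h2)
    refine hqfd C ⟨⟨Submodule.Quotient.mk 1, ?_⟩⟩ (fun n => (X n).map j) ?_ ?_ ?_
    · -- ⊤ is principal
      refine le_antisymm ?_ le_top
      intro z _
      obtain ⟨a, rfl⟩ := Submodule.Quotient.mk_surjective _ z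
      refine Submodule.mem_span_singleton.2 ⟨a, ?_⟩
      rw [← Submodule.Quotient.mk_smul]
      simp [smul_eq_mul]
    · exact iSupIndep_map_of_injective hj hXind
    · intro n
      intro hbot
      have hbot' : (X n).map j = ⊥ := hbot
      obtain ⟨v, hv, hv0⟩ := (Submodule.ne_bot_iff (X n)).1 (hXbot n)
      have : j v ∈ (X n).map j := ⟨v, hv, rfl⟩
      rw [hbot', Submodule.mem_bot] at this
      exact hv0 (hj (by simpa using this))
    · intro n
      haveI hsim : IsSimpleModule A ↥(X n) := hs_simp _ (hXs n)
      obtain ⟨v, hv, hv0⟩ := (Submodule.ne_bot_iff (X n)).1 (hXbot n)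
      have hvco : (v : ι →₀ S) ≠ 0 := by
        simpa using hv0
      obtain ⟨i0, hi0⟩ : ∃ i0, (v : ι →₀ S) i0 ≠ 0 := by
        by_contra hcontra
        push_neg at hcontra
        exact hvco (Finsupp.ext hcontra)
      let κ : ↥(X n) →ₗ[A] S := (Finsupp.lapply i0).comp (V.subtype.comp (X n).subtype)
      have hκv : κ ⟨v, hv⟩ ≠ 0 := by simpa [κ] using hi0
      have hker : LinearMap.ker κ = ⊥ := by
        haveI : IsSimpleOrder (Submodule A ↥(X n)) := hsim.toIsSimpleOrder
        rcases eq_bot_or_eq_top (LinearMap.ker κ) with h | h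
        · exact h
        · exact absurd (by rw [LinearMap.ker_eq_top.1 h]; rfl) hκv
      have hκ : Function.Injective κ := by
        intro a b hab
        have hab' : ((a : ↥V) : ι →₀ S) i0 = ((b : ↥V) : ι →₀ S) i0 := hab
        have h := LinearMap.ker_eq_bot'.1 hker (a - b) (by
          show (((a - b : ↥(X n)) : ↥V) : ι →₀ S) i0 = 0
          simp [hab'])
        exact sub_eq_zero.1 h
      refine ⟨LinearMap.range κ, ⟨?_⟩⟩
      exact (Submodule.equivMapOfInjective j hj (X n)).symm.trans (LinearEquiv.ofInjective κ hκ)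

end Aux

/-! ### Ring-specific lemmas -/

section Main

variable {R : Type u} [Ring R]

/-- `op` as an `Rᵐᵒᵖ`-linear equivalence between the right module `R` and `Rᵐᵒᵖ`. -/
noncomputable def opLin : R ≃ₗ[Rᵐᵒᵖ] Rᵐᵒᵖ where
  toFun := op
  invFun := unop
  left_inv := fun _ => rfl
  right_inv := fun _ => rfl
  map_add' := fun _ _ => rfl
  map_smul' := fun a r => by
    show op (a • r) = a * op r
    rw [MulOpposite.smul_eq_mul_unop, MulOpposite.op_mul, MulOpposite.op_unop]

/-- If a simple ring has a simple right ideal, it is semisimple (as a right module). -/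
theorem semisimple_of_simple_ideal (hsimple : IsSimpleRing R)
    (J : Submodule Rᵐᵒᵖ R) (hJ : IsSimpleModule Rᵐᵒᵖ ↥J) :
    IsSemisimpleModule Rᵐᵒᵖ R := by
  classical
  haveI := hsimple
  haveI := hJ
  let lmul : R → (R →ₗ[Rᵐᵒᵖ] R) := fun b =>
    { toFun := fun r => b * r
      map_add' := fun x y => mul_add b x y
      map_smul' := fun a r => by
        show b * (a • r) = a • (b * r)
        rw [MulOpposite.smul_eq_mul_unop, MulOpposite.smul_eq_mul_unop, mul_assoc] }
  let T : Submodule Rᵐᵒᵖ R := ⨆ b : R, (J.map (lmul b))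
  have hTle : ∀ b, J.map (lmul b) ≤ T := fun b => le_iSup (fun b => J.map (lmul b)) b
  have hmul_left : ∀ (x y : R), y ∈ T → x * y ∈ T := by
    intro x y hy
    refine Submodule.iSup_induction (motive := fun z => x * z ∈ T) _ hy ?_ ?_ ?_
    · rintro b z hz
      obtain ⟨jj, hjj, rfl⟩ := hz
      show x * ((lmul b) jj) ∈ T
      have : x * ((lmul b) jj) = (lmul (x * b)) jj := by
        show x * (b * jj) = (x * b) * jj
        rw [mul_assoc]
      rw [this]
      exact hTle (x * b) ⟨jj, hjj, rfl⟩
    · show x * 0 ∈ T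
      rw [mul_zero]; exact T.zero_mem
    · intro u v hu hv
      show x * (u + v) ∈ T
      rw [mul_add]
      exact T.add_mem hu hv
  obtain ⟨z, hzJ, hz0⟩ := (Submodule.ne_bot_iff J).1 (by
    intro hbot
    haveI := hJ
    rcases (isSimpleModule_iff_isAtom (m := J)).1 hJ with hatom
    exact hatom.1 hbot)
  have hzT : z ∈ T := by
    refine hTle 1 ⟨z, hzJ, ?_⟩
    show (1 : R) * z = z
    rw [one_mul]
  let T2 : TwoSidedIdeal R := TwoSidedIdeal.mk' ↑T T.zero_mem
    (fun hx hy => T.add_mem hx hy) (fun hx => T.neg_mem hx)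
    (fun {x y} hy => hmul_left x y hy)
    (fun {x y} hx => by
      show x * y ∈ T
      have := T.smul_mem (op y) hx
      rwa [op_smul_eq_mul] at this)
  have h1T : (1 : R) ∈ T := by
    have h1 : (1 : R) ∈ T2 := IsSimpleRing.one_mem_of_ne_zero_mem T2 hz0
      (by rw [TwoSidedIdeal.mem_mk']; exact hzT)
    rwa [TwoSidedIdeal.mem_mk'] at h1
  have hTtop : T = ⊤ := by
    rw [Submodule.eq_top_iff']
    intro r
    have := T.smul_mem (op r) h1T
    rwa [op_smul_eq_mul, one_mul] at this
  refine IsSemisimpleModule.of_sSup_simples_eq_top ?_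
  rw [eq_top_iff, ← hTtop]
  refine iSup_le fun b => ?_
  rcases map_simple_or_bot (lmul b) J hJ with h | h
  · rw [h]; exact bot_le
  · exact le_sSup h

/-- In the semisimple case, essential right ideals are all of `R`. -/
theorem caseA_ess_top (hsemi : IsSemisimpleModule Rᵐᵒᵖ R) (I : Submodule Rᵐᵒᵖ R)
    (hess : ∀ J : Submodule Rᵐᵒᵖ R, J ≠ ⊥ → I ⊓ J ≠ ⊥) : I = ⊤ := by
  haveI := hsemi
  obtain ⟨I', hc⟩ := exists_isCompl I
  by_cases hI' : I' = ⊥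
  · rw [hI'] at hc
    have := hc.sup_eq_top
    rwa [sup_bot_eq] at this
  · exact absurd (disjoint_iff.1 hc.disjoint) (hess I' hI')

/-- In the semisimple case there is no singular simple module. -/
theorem caseA_no_singular (hsemi : IsSemisimpleModule Rᵐᵒᵖ R) (S : Type u)
    [AddCommGroup S] [Module Rᵐᵒᵖ S] (hS : IsSimpleModule Rᵐᵒᵖ S)
    (hsing : IsSingularModule R S) : False := by
  haveI := hS
  haveI : Nontrivial S := IsSimpleModule.nontrivial Rᵐᵒᵖ S
  obtain ⟨m, hm⟩ := exists_ne (0 : S)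
  obtain ⟨I, hess, hann⟩ := hsing m
  have hI : I = ⊤ := caseA_ess_top hsemi I hess
  have h1 : (1 : R) ∈ I := by rw [hI]; trivial
  have := hann 1 h1
  rw [op_one, one_smul] at this
  exact hm this

/-- In the semisimple case, every module is injective. -/
theorem caseA_injective (hsemi : IsSemisimpleModule Rᵐᵒᵖ R)
    (Q : Type u) [AddCommGroup Q] [Module Rᵐᵒᵖ Q] : Module.Injective Rᵐᵒᵖ Q := by
  haveI := hsemi
  haveI : IsSemisimpleModule Rᵐᵒᵖ Rᵐᵒᵖ := IsSemisimpleModule.congr (opLin (R := R)).symm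
  refine Module.Baer.injective fun I g => ?_
  obtain ⟨I', hc⟩ := exists_isCompl I
  refine ⟨g.comp (Submodule.linearProjOfIsCompl I I' hc), fun x mem => ?_⟩
  have hproj : Submodule.linearProjOfIsCompl I I' hc x = ⟨x, mem⟩ :=
    Submodule.linearProjOfIsCompl_apply_left hc ⟨x, mem⟩
  show g (Submodule.linearProjOfIsCompl I I' hc x) = g ⟨x, mem⟩
  rw [hproj]

/-- If `R` has no simple right ideal, every simple right module is singular. -/
theorem caseB_singular (hB : ∀ J : Submodule Rᵐᵒᵖ R, ¬ IsSimpleModule Rᵐᵒᵖ ↥J)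
    (S : Type u) [AddCommGroup S] [Module Rᵐᵒᵖ S] (hS : IsSimpleModule Rᵐᵒᵖ S) :
    IsSingularModule R S := by
  haveI := hS
  intro m
  by_cases hm : m = 0
  · refine ⟨⊤, fun J hJ => by simpa using hJ, fun r _ => by rw [hm, smul_zero]⟩
  · have hopsmul : ∀ (c : Rᵐᵒᵖ) (r : R), op (c • r) = c * op r := by
      intro c r
      rw [MulOpposite.smul_eq_mul_unop, MulOpposite.op_mul, MulOpposite.op_unop]
    let ann : Submodule Rᵐᵒᵖ R :=
      { carrier := {r : R | op r • m = 0}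
        add_mem' := by
          intro a b ha hb
          show op (a + b) • m = 0
          rw [op_add, add_smul, ha, hb, add_zero]
        zero_mem' := by
          show op (0 : R) • m = 0
          rw [op_zero, zero_smul]
        smul_mem' := by
          intro c r hr
          show op (c • r) • m = 0
          rw [hopsmul, mul_smul, hr, smul_zero] }
    refine ⟨ann, ?_, fun r hr => hr⟩
    intro J hJ hbot
    let φ : ↥J →ₗ[Rᵐᵒᵖ] S :=
      { toFun := fun x => op (x : R) • m
        map_add' := by
          intro x y
          show op ((x : R) + y) • m = op (x : R) • m + op (y : R) • m
          rw [op_add, add_smul]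
        map_smul' := by
          intro c x
          show op (c • (x : R)) • m = c • (op (x : R) • m)
          rw [hopsmul, mul_smul] }
    have hφinj : Function.Injective φ := by
      rw [← LinearMap.ker_eq_bot]
      rw [eq_bot_iff]
      intro x hx
      have hxann : (x : R) ∈ ann := hx
      have : (x : R) ∈ ann ⊓ J := ⟨hxann, x.2⟩
      rw [hbot, Submodule.mem_bot] at this
      exact Submodule.coe_eq_zero.1 this
    have hφne : LinearMap.range φ ≠ ⊥ := by
      obtain ⟨x, hxJ, hx0⟩ := (Submodule.ne_bot_iff J).1 hJ
      intro hbot'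
      have : φ ⟨x, hxJ⟩ ∈ LinearMap.range φ := ⟨⟨x, hxJ⟩, rfl⟩
      rw [hbot', Submodule.mem_bot] at this
      have := hφinj (a₁ := ⟨x, hxJ⟩) (a₂ := 0) (by simpa using this)
      exact hx0 (by simpa using congrArg Subtype.val this)
    have hφsurj : Function.Surjective φ :=
      LinearMap.range_eq_top.1 ((eq_bot_or_eq_top (LinearMap.range φ)).resolve_left hφne)
    exact hB J (IsSimpleModule.congr (LinearEquiv.ofBijective φ ⟨hφinj, hφsurj⟩))

end Main

/-- For a simple right Goldie ring `R` the following are equivalent: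
(1) `R` is a right Σ-V ring;
(2) every singular simple right `R`-module is Σ-injective;
(3) `R` is a right V-ring and `R` is q.f.d. relative to every singular simple
    right `R`-module. -/
theorem simple_rightGoldie_rightSigmaV_tfae (R : Type u) [Ring R]
    (hsimple : IsSimpleRing R) (hgoldie : IsRightGoldieRing R) :
    List.TFAE
      [IsRightSigmaVRing R,
       ∀ (S : Type u) [AddCommGroup S] [Module Rᵐᵒᵖ S],
         IsSimpleModule Rᵐᵒᵖ S → IsSingularModule R S → IsSigmaInjective Rᵐᵒᵖ S,
       IsRightVRing R ∧
         ∀ (S : Type u) [AddCommGroup S] [Module Rᵐᵒᵖ S],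
           IsSimpleModule Rᵐᵒᵖ S → IsSingularModule R S → QfdRelativeTo Rᵐᵒᵖ S] := by
  classical
  tfae_have 1 → 2 := by
    intro h1 S _ _ hS _
    exact h1 S hS
  tfae_have 2 → 3 := by
    intro h2
    constructor
    · intro S _ _ hS
      by_cases hA : ∃ J : Submodule Rᵐᵒᵖ R, IsSimpleModule Rᵐᵒᵖ ↥J
      · obtain ⟨J, hJ⟩ := hA
        exact caseA_injective (semisimple_of_simple_ideal hsimple J hJ) S
      · push_neg at hA
        have hsing := caseB_singular hA S hS
        haveI := hS
        exact Module.Injective.congr'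
          (Finsupp.LinearEquiv.finsuppUnique Rᵐᵒᵖ S PUnit) (h2 S hS hsing PUnit)
    · intro S _ _ hS hsing
      exact QfdRelativeTo.of_sigmaInjective (h2 S hS hsing)
  tfae_have 3 → 1 := by
    rintro ⟨hV, hq⟩ S _ _ hS
    by_cases hA : ∃ J : Submodule Rᵐᵒᵖ R, IsSimpleModule Rᵐᵒᵖ ↥J
    · obtain ⟨J, hJ⟩ := hA
      intro ι
      exact caseA_injective (semisimple_of_simple_ideal hsimple J hJ) (ι →₀ S)
    · push_neg at hA
      have hsing := caseB_singular hA S hS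
      haveI := hS
      exact IsSigmaInjective.of_injective_qfd (hV S hS) (hq S hS hsing)
  tfae_finish
end

section
/- Let R be a right V-ring such that for every simple right R-module S, no cyclic right R-module contains an infinite direct sum of copies of S. Then for every simple right R-module S, the injective hull of any direct sum of copies of S is semisimple; consequently every simple right R-module is Σ-injective. -/
universe u

open MulOpposite

section Aux

variable {A : Type u} [Ring A]

/-- A product of injective modules is injective. -/
lemma aux_injective_pi {ι : Type u} {M : ι → Type u} [∀ i, AddCommGroup (M i)]
    [∀ i, Module A (M i)] (h : ∀ i, Module.Injective A (M i)) :
    Module.Injective A (∀ i, M i) := by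
  constructor
  intro X Y _ _ _ _ f hf g
  choose H hH using fun i => (h i).out f hf ((LinearMap.proj i) ∘ₗ g)
  exact ⟨LinearMap.pi H, fun x => funext fun i => hH i x⟩

/-- Injectivity transfers along linear equivalences. -/
lemma aux_injective_congr {M N : Type u} [AddCommGroup M] [Module A M] [AddCommGroup N]
    [Module A N] (e : M ≃ₗ[A] N) (h : Module.Injective A M) : Module.Injective A N := by
  constructor
  intro X Y _ _ _ _ f hf g
  obtain ⟨H, hH⟩ := h.out f hf (e.symm.toLinearMap ∘ₗ g)
  refine ⟨e.toLinearMap ∘ₗ H, fun x => ?_⟩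
  have := hH x
  simp only [LinearMap.coe_comp, Function.comp_apply, LinearEquiv.coe_coe] at this ⊢
  rw [this, LinearEquiv.apply_symm_apply]

lemma aux_iSupIndep_map {M N : Type u} [AddCommGroup M] [Module A M] [AddCommGroup N]
    [Module A N] {ι : Sort*} {p : ι → Submodule A M} (φ : M →ₗ[A] N)
    (hφ : Function.Injective φ) (hp : iSupIndep p) :
    iSupIndep fun i => (p i).map φ := by
  intro i
  rw [disjoint_iff]
  simp_rw [← Submodule.map_iSup]
  rw [← Submodule.map_inf _ hφ, (hp i).eq_bot, Submodule.map_bot]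

lemma aux_iSupIndep_of_map {M N : Type u} [AddCommGroup M] [Module A M] [AddCommGroup N]
    [Module A N] {ι : Sort*} {p : ι → Submodule A M} (φ : M →ₗ[A] N)
    (hφ : Function.Injective φ) (hp : iSupIndep fun i => (p i).map φ) :
    iSupIndep p := by
  intro i
  rw [disjoint_iff, Submodule.eq_bot_iff]
  intro z hz
  rw [Submodule.mem_inf] at hz
  have h1 : φ z ∈ (p i).map φ ⊓ ⨆ (j) (_ : j ≠ i), (p j).map φ := by
    refine Submodule.mem_inf.2 ⟨Submodule.mem_map_of_mem hz.1, ?_⟩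
    have : φ z ∈ (⨆ (j) (_ : j ≠ i), p j).map φ := Submodule.mem_map_of_mem hz.2
    simpa only [Submodule.map_iSup] using this
  rw [(hp i).eq_bot, Submodule.mem_bot] at h1
  exact hφ (by rw [h1, map_zero])

/-- Any simple submodule contained in an isotypic (type `S`) semisimple submodule is
isomorphic to `S`. -/
lemma aux_simple_iso {S E : Type u} [AddCommGroup S] [Module A S] [AddCommGroup E]
    [Module A E] (hS : IsSimpleModule A S) {τ : Type u} (f : (τ →₀ S) →ₗ[A] E)
    (hf : Function.Injective f) (T : Submodule A E) (hTP : T ≤ LinearMap.range f)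
    (hT : IsSimpleModule A T) : Nonempty (T ≃ₗ[A] S) := by
  haveI := hS
  haveI := hT
  let e : (τ →₀ S) ≃ₗ[A] LinearMap.range f := LinearEquiv.ofInjective f hf
  haveI : Nontrivial T := IsSimpleModule.nontrivial A T
  obtain ⟨t0, ht0⟩ := exists_ne (0 : T)
  set m : τ →₀ S := e.symm ⟨(t0 : E), hTP t0.2⟩ with hm
  have hmne : m ≠ 0 := by
    intro h
    apply ht0
    have : ((t0 : E)) = 0 := by
      have := congrArg e h
      rw [LinearEquiv.apply_symm_apply, map_zero] at this
      exact congrArg Subtype.val this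
    exact Subtype.ext this
  obtain ⟨j, hj⟩ : ∃ j, m j ≠ 0 := by
    by_contra h
    push_neg at h
    exact hmne (Finsupp.ext h)
  let φ : T →ₗ[A] S :=
    (Finsupp.lapply j) ∘ₗ (e.symm.toLinearMap) ∘ₗ (Submodule.inclusion hTP)
  have hφt0 : φ t0 = m j := by
    have : Submodule.inclusion hTP t0 = ⟨(t0 : E), hTP t0.2⟩ := rfl
    simp only [φ, LinearMap.coe_comp, Function.comp_apply, LinearEquiv.coe_coe, this, ← hm]
    rfl
  have hφ0 : φ ≠ 0 := by
    intro h
    rw [h] at hφt0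
    exact hj hφt0.symm
  have hbij := φ.bijective_or_eq_zero.resolve_right hφ0
  exact ⟨LinearEquiv.ofBijective φ hbij⟩

/-- A direct sum of copies of a simple module is semisimple. -/
lemma aux_finsupp_semisimple {S : Type u} [AddCommGroup S] [Module A S]
    (hS : IsSimpleModule A S) (τ : Type u) : IsSemisimpleModule A (τ →₀ S) := by
  haveI := hS
  refine isSemisimpleModule_of_isSemisimpleModule_submodule'
    (p := fun j : τ => LinearMap.range (Finsupp.lsingle j : S →ₗ[A] τ →₀ S))
    (fun j => ?_) Finsupp.iSup_lsingle_range
  have hinj : Function.Injective (Finsupp.lsingle j : S →ₗ[A] τ →₀ S) :=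
    Finsupp.single_injective j
  exact IsSemisimpleModule.congr (LinearEquiv.ofInjective _ hinj).symm

/-- Core lemma: if a direct sum of copies of an injective simple module `S` embeds as an
essential submodule in `E`, and no cyclic module contains an infinite direct sum of copies
of `S`, then the embedding is onto. -/
theorem aux_core {S : Type u} [AddCommGroup S] [Module A S]
    (hS : IsSimpleModule A S) (hSinj : Module.Injective A S)
    (hq : ∀ (C : Type u) [AddCommGroup C] [Module A C], (⊤ : Submodule A C).IsPrincipal →
        ∀ N : ℕ → Submodule A C, iSupIndep N → (∀ i, Nonempty ((N i) ≃ₗ[A] S)) → False)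
    (τ E : Type u) [AddCommGroup E] [Module A E]
    (f : (τ →₀ S) →ₗ[A] E) (hf : Function.Injective f)
    (hess : ∀ K : Submodule A E, K ≠ ⊥ → LinearMap.range f ⊓ K ≠ ⊥) :
    LinearMap.range f = ⊤ := by
  classical
  set P := LinearMap.range f with hPdef
  haveI hPss : IsSemisimpleModule A P := by
    haveI := aux_finsupp_semisimple hS τ
    exact IsSemisimpleModule.range f
  rw [Submodule.eq_top_iff']
  intro x
  set C : Submodule A E := Submodule.span A {x} with hCdef
  have hxC : x ∈ C := Submodule.mem_span_singleton_self x
  set W : Submodule A E := P ⊓ C with hWdef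
  have hWP : W ≤ P := inf_le_left
  have hWC : W ≤ C := inf_le_right
  haveI hWss : IsSemisimpleModule A W := by
    have e := W.comap_equiv_self_of_inj_of_le P.injective_subtype
      (by rwa [Submodule.range_subtype])
    exact IsSemisimpleModule.congr e.symm
  obtain ⟨s, hindep, hsSup, hsimple⟩ :=
    IsSemisimpleModule.exists_sSupIndep_sSup_simples_eq_top A W
  have hiso : ∀ T : Submodule A W, T ∈ s → Nonempty ((T.map W.subtype) ≃ₗ[A] S) := by
    intro T hTs
    have hle : T.map W.subtype ≤ P := le_trans (Submodule.map_subtype_le W T) hWP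
    haveI := hsimple T hTs
    have hsimple' : IsSimpleModule A (T.map W.subtype) :=
      IsSimpleModule.congr (Submodule.equivMapOfInjective W.subtype W.injective_subtype T).symm
    exact aux_simple_iso hS f hf _ hle hsimple'
  -- `s` must be finite
  have hsfin : s.Finite := by
    by_contra hinf
    let emb := Set.Infinite.natEmbedding s hinf
    have hprin : (⊤ : Submodule A C).IsPrincipal := by
      refine ⟨⟨⟨x, hxC⟩, ?_⟩⟩
      refine le_antisymm ?_ le_top
      rintro ⟨c, hc⟩ -
      rw [Submodule.mem_span_singleton] at hc
      obtain ⟨a, ha⟩ := hc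
      rw [Submodule.mem_span_singleton]
      exact ⟨a, Subtype.ext ha⟩
    set T : ℕ → Submodule A W := fun n => (emb n : Submodule A W) with hT
    set N : ℕ → Submodule A C := fun n => ((T n).map W.subtype).comap C.subtype with hN
    have hTle : ∀ n, (T n).map W.subtype ≤ C := fun n =>
      le_trans (Submodule.map_subtype_le W (T n)) hWC
    have hindep1 : iSupIndep T := by
      have h0 : iSupIndep ((↑) : s → Submodule A W) := (sSupIndep_iff s).mp hindep
      exact h0.comp emb.injective
    have hindep2 : iSupIndep fun n => (T n).map W.subtype :=
      aux_iSupIndep_map W.subtype W.injective_subtype hindep1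
    have hindepN : iSupIndep N := by
      refine aux_iSupIndep_of_map C.subtype C.injective_subtype ?_
      have : ∀ n, (N n).map C.subtype = (T n).map W.subtype := fun n =>
        Submodule.map_comap_eq_of_le (by rw [Submodule.range_subtype]; exact hTle n)
      simpa only [this] using hindep2
    refine hq C hprin N hindepN fun n => ?_
    have e1 : (N n : Submodule A C) ≃ₗ[A] ((T n).map W.subtype) :=
      Submodule.comap_equiv_self_of_inj_of_le C.injective_subtype
        (by rw [Submodule.range_subtype]; exact hTle n)
    exact ⟨e1.trans (hiso (T n) (emb n).2).some⟩
  -- `W` is injective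
  haveI := hsfin.fintype
  have hWinj : Module.Injective A W := by
    have hind : iSupIndep (fun a : s => (a : Submodule A W)) := (sSupIndep_iff s).mp hindep
    have htop : ⨆ a : s, (a : Submodule A W) = ⊤ := by
      rw [← sSup_eq_iSup']; exact hsSup
    have hint := DirectSum.isInternal_submodule_of_iSupIndep_of_iSup_eq_top hind htop
    let e1 : (DirectSum s fun a => ↥(a : Submodule A W)) ≃ₗ[A] W :=
      LinearEquiv.ofBijective (DirectSum.coeLinearMap _) hint
    let e2 : (DirectSum s fun a => ↥(a : Submodule A W)) ≃ₗ[A] (∀ a : s, ↥(a : Submodule A W)) :=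
      DirectSum.linearEquivFunOnFintype A s _
    have hpi : Module.Injective A (∀ a : s, ↥(a : Submodule A W)) := by
      refine aux_injective_pi fun a => ?_
      have ea : ((a : Submodule A W) : Type u) ≃ₗ[A] S :=
        (Submodule.equivMapOfInjective W.subtype W.injective_subtype _).trans
          (hiso a a.2).some
      exact aux_injective_congr ea.symm hSinj
    exact aux_injective_congr (e2.symm.trans e1) hpi
  -- split `C` by `W`
  obtain ⟨r, hr⟩ := hWinj.out (Submodule.inclusion hWC) (Submodule.inclusion_injective hWC)
    LinearMap.id
  have hker : LinearMap.ker r = ⊥ := by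
    by_contra hne
    have hK : (LinearMap.ker r).map C.subtype ≠ ⊥ := by
      intro h
      apply hne
      apply Submodule.map_injective_of_injective C.injective_subtype
      rw [h, Submodule.map_bot]
    obtain ⟨z, hz, hz0⟩ := (P ⊓ (LinearMap.ker r).map C.subtype).ne_bot_iff.mp (hess _ hK)
    rw [Submodule.mem_inf] at hz
    obtain ⟨c, hcker, hcz⟩ := hz.2
    have hzC : z ∈ C := by rw [← hcz]; exact c.2
    have hzW : z ∈ W := Submodule.mem_inf.2 ⟨hz.1, hzC⟩
    have hic : Submodule.inclusion hWC ⟨z, hzW⟩ = c :=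
      Subtype.ext (by rw [Submodule.coe_inclusion]; exact hcz.symm)
    have : (⟨z, hzW⟩ : W) = 0 := by
      have h1 := hr ⟨z, hzW⟩
      rw [hic] at h1
      have h0 : r c = 0 := hcker
      rw [h0] at h1
      exact h1.symm
    exact hz0 (by simpa using congrArg Subtype.val this)
  have hrinj : Function.Injective r := LinearMap.ker_eq_bot.mp hker
  set c : C := ⟨x, hxC⟩ with hc
  have h1 : r (Submodule.inclusion hWC (r c)) = r c := hr (r c)
  have h2 : Submodule.inclusion hWC (r c) = c := hrinj h1
  have h3 : ((r c : W) : E) = x := by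
    have := congrArg Subtype.val h2
    simpa [Submodule.coe_inclusion] using this
  exact h3 ▸ hWP (r c).2

end Aux

/-- Let `R` be a right V-ring such that for every simple right `R`-module `S`, no cyclic
right `R`-module contains an infinite direct sum of copies of `S`.  Then for every simple
right `R`-module `S`, any injective hull of any direct sum of copies of `S` is semisimple;
consequently every simple right `R`-module is Σ-injective. -/
theorem semisimple_hull_and_sigmaInjective_of_rightV_qfd (R : Type u) [Ring R]
    (hV : IsRightVRing R)
    (hqfd : ∀ (S : Type u) [AddCommGroup S] [Module Rᵐᵒᵖ S], IsSimpleModule Rᵐᵒᵖ S →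
      ∀ (C : Type u) [AddCommGroup C] [Module Rᵐᵒᵖ C], (⊤ : Submodule Rᵐᵒᵖ C).IsPrincipal →
        ∀ N : ℕ → Submodule Rᵐᵒᵖ C, iSupIndep N →
          (∀ i, Nonempty ((N i) ≃ₗ[Rᵐᵒᵖ] S)) → False) :
    (∀ (S : Type u) [AddCommGroup S] [Module Rᵐᵒᵖ S], IsSimpleModule Rᵐᵒᵖ S →
      ∀ (τ : Type u) (E : Type u) [AddCommGroup E] [Module Rᵐᵒᵖ E],
        Module.Injective Rᵐᵒᵖ E →
        ∀ f : (τ →₀ S) →ₗ[Rᵐᵒᵖ] E, Function.Injective f →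
          (∀ K : Submodule Rᵐᵒᵖ E, K ≠ ⊥ → LinearMap.range f ⊓ K ≠ ⊥) →
          IsSemisimpleModule Rᵐᵒᵖ E) ∧
    (∀ (S : Type u) [AddCommGroup S] [Module Rᵐᵒᵖ S], IsSimpleModule Rᵐᵒᵖ S →
      IsSigmaInjective Rᵐᵒᵖ S) := by
  classical
  constructor
  · intro S _ _ hS τ E _ _ hE f hf hess
    have hr := aux_core hS (hV S hS) (hqfd S hS) τ E f hf hess
    have hsurj : Function.Surjective f := LinearMap.range_eq_top.mp hr
    haveI := aux_finsupp_semisimple hS τ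
    exact IsSemisimpleModule.congr (LinearEquiv.ofBijective f ⟨hf, hsurj⟩).symm
  · intro S _ _ hS τ
    -- embed `M := τ →₀ S` into an injective module `Q`
    set M : Type u := τ →₀ S with hM
    let Mc : ModuleCat.{u} Rᵐᵒᵖ := ModuleCat.of Rᵐᵒᵖ M
    let Qc : ModuleCat.{u} Rᵐᵒᵖ := CategoryTheory.Injective.under Mc
    let gc : Mc ⟶ Qc := CategoryTheory.Injective.ι Mc
    let g : M →ₗ[Rᵐᵒᵖ] Qc := gc.hom
    have hg : Function.Injective g :=
      (ModuleCat.mono_iff_injective gc).mp inferInstance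
    haveI : CategoryTheory.Injective (ModuleCat.of Rᵐᵒᵖ Qc) :=
      CategoryTheory.Injective.injective_under Mc
    have hQinj : Module.Injective Rᵐᵒᵖ Qc := Module.injective_module_of_injective_object _ _
    set P : Submodule Rᵐᵒᵖ Qc := LinearMap.range g with hP
    -- find a maximal complement `K` to `P`
    obtain ⟨K, -, hKmax⟩ := zorn_le_nonempty₀ {K : Submodule Rᵐᵒᵖ Qc | K ⊓ P = ⊥}
      (fun c hcs hchain y hy => by
        refine ⟨sSup c, ?_, fun z hz => le_sSup hz⟩
        show sSup c ⊓ P = ⊥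
        rw [Submodule.eq_bot_iff]
        intro z hz
        rw [Submodule.mem_inf] at hz
        obtain ⟨w, hwc, hzw⟩ :=
          (Submodule.mem_sSup_of_directed ⟨y, hy⟩ hchain.directedOn).mp hz.1
        have : z ∈ w ⊓ P := Submodule.mem_inf.2 ⟨hzw, hz.2⟩
        rw [hcs hwc] at this
        exact this) ⊥ (by simp)
    have hKP : K ⊓ P = ⊥ := hKmax.1
    -- the map `M → Q/K` is injective with essential range
    let f' : M →ₗ[Rᵐᵒᵖ] (Qc ⧸ K) := K.mkQ ∘ₗ g
    have hf' : Function.Injective f' := by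
      intro a b hab
      apply hg
      have : g (a - b) ∈ K := by
        rw [← Submodule.Quotient.mk_eq_zero K]
        have : f' (a - b) = 0 := by rw [map_sub, hab, sub_self]
        simpa [f'] using this
      have h2 : g (a - b) ∈ K ⊓ P := Submodule.mem_inf.2 ⟨this, LinearMap.mem_range_self g _⟩
      rw [hKP, Submodule.mem_bot] at h2
      rw [← sub_eq_zero, ← map_sub]
      exact h2
    have hess : ∀ L : Submodule Rᵐᵒᵖ (Qc ⧸ K), L ≠ ⊥ → LinearMap.range f' ⊓ L ≠ ⊥ := by
      intro L hL
      set T : Submodule Rᵐᵒᵖ Qc := L.comap K.mkQ with hTdef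
      have hKT : K ≤ T := fun k hk => by
        have : K.mkQ k = 0 := by simpa using (Submodule.Quotient.mk_eq_zero K).mpr hk
        simp only [T, Submodule.mem_comap, this]
        exact L.zero_mem
      have hTne : ¬ T ≤ K := by
        intro hTK
        apply hL
        rw [Submodule.eq_bot_iff]
        intro l hl
        obtain ⟨t, rfl⟩ := K.mkQ_surjective l
        have : t ∈ T := by simpa [T] using hl
        exact (Submodule.Quotient.mk_eq_zero K).mpr (hTK this)
      have hTP : T ⊓ P ≠ ⊥ := by
        intro h
        exact hTne (hKmax.2 h hKT)
      obtain ⟨p, hp, hp0⟩ := (T ⊓ P).ne_bot_iff.mp hTP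
      rw [Submodule.mem_inf] at hp
      rw [Submodule.ne_bot_iff]
      refine ⟨K.mkQ p, Submodule.mem_inf.2 ⟨?_, hp.1⟩, ?_⟩
      · obtain ⟨m, hm⟩ := hp.2
        exact ⟨m, by simp [f', hm]⟩
      · intro h
        rw [Submodule.mkQ_apply, Submodule.Quotient.mk_eq_zero] at h
        have : p ∈ K ⊓ P := Submodule.mem_inf.2 ⟨h, hp.2⟩
        rw [hKP, Submodule.mem_bot] at this
        exact hp0 this
    have hr := aux_core hS (hV S hS) (hqfd S hS) τ (Qc ⧸ K) f' hf' hess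
    -- `Q = P ⊕ K`
    have hsup : P ⊔ K = ⊤ := by
      rw [Submodule.eq_top_iff']
      intro q
      have hmem : K.mkQ q ∈ LinearMap.range f' := hr ▸ Submodule.mem_top
      obtain ⟨m, hm⟩ := hmem
      have hqk : q - g m ∈ K := by
        rw [← Submodule.Quotient.mk_eq_zero K]
        have h1 : K.mkQ (q - g m) = 0 := by
          rw [map_sub]
          have h2 : K.mkQ (g m) = K.mkQ q := hm
          rw [h2, sub_self]
        simpa using h1
      have hadd := Submodule.add_mem_sup (LinearMap.mem_range_self g m) hqk
      simpa using hadd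
    have hcompl : IsCompl P K :=
      ⟨by rw [disjoint_iff, inf_comm]; exact hKP, codisjoint_iff.mpr hsup⟩
    let pr := Submodule.linearProjOfIsCompl P K hcompl
    let eP : M ≃ₗ[Rᵐᵒᵖ] P := LinearEquiv.ofInjective g hg
    constructor
    intro X Y _ _ _ _ φ hφ ψ
    obtain ⟨H, hH⟩ := hQinj.out φ hφ (g ∘ₗ ψ)
    refine ⟨(eP.symm.toLinearMap ∘ₗ pr) ∘ₗ H, fun x0 => ?_⟩
    have h1 : H (φ x0) = g (ψ x0) := by simpa using hH x0
    have h2 : pr (g (ψ x0)) = ⟨g (ψ x0), LinearMap.mem_range_self g _⟩ :=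
      Submodule.linearProjOfIsCompl_apply_left hcompl ⟨g (ψ x0), LinearMap.mem_range_self g _⟩
    have h3 : eP (ψ x0) = ⟨g (ψ x0), LinearMap.mem_range_self g _⟩ :=
      Subtype.ext (LinearEquiv.ofInjective_apply g (ψ x0))
    simp only [LinearMap.coe_comp, Function.comp_apply, LinearEquiv.coe_coe]
    rw [h1, h2, ← h3, LinearEquiv.symm_apply_apply]
end
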